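/- Let R be a central reduced ring that is nil clean. Then R is commutative. -/

import Mathlib

/-- A ring is central reduced if every nilpotent element is central. -/
def IsCentralReduced (R : Type*) [Ring R] : Prop :=
  ∀ a : R, IsNilpotent a → a ∈ Set.center R

theorem stmt_12 (R : Type*) [Ring R] (hcr : IsCentralReduced R)
    (hnc : ∀ a : R, ∃ e b : R, IsIdempotentElem e ∧ IsNilpotent b ∧ a = e + b) :
    ∀ x y : R, x * y = y * x := by
  have idem_cent : ∀ e x : R, IsIdempotentElem e → e * x = x * e := by
    intro e x he
    have hee : e * e = e := he
    have he2 : ∀ t : R, e * (e * t) = e * t := fun t => by rw [← mul_assoc, hee]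
    have h1 : (e*x - e*x*e) * (e*x - e*x*e) = 0 := by
      simp only [mul_sub, sub_mul, mul_assoc, he2]
      abel
    have h2 : (x*e - e*x*e) * (x*e - e*x*e) = 0 := by
      simp only [mul_sub, sub_mul, mul_assoc, he2, hee]
      abel
    have c1 := (Set.mem_center_iff.mp (hcr _ ⟨2, by rw [pow_two]; exact h1⟩)).comm e
    have c2 := (Set.mem_center_iff.mp (hcr _ ⟨2, by rw [pow_two]; exact h2⟩)).comm e
    -- c1 : (e*x - e*x*e) * e = e * (e*x - e*x*e)
    have e1 : e*x = e*x*e := by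
      have lhs : e * (e*x - e*x*e) = e*x - e*x*e := by
        simp only [mul_sub, mul_assoc, he2]
      have rhs : (e*x - e*x*e) * e = 0 := by
        rw [sub_mul, mul_assoc (e*x) e e, hee, sub_self]
      replace c1 := c1.eq
      rw [lhs, rhs] at c1
      exact eq_of_sub_eq_zero c1.symm
    have e2 : x*e = e*x*e := by
      have lhs : e * (x*e - e*x*e) = 0 := by
        simp only [mul_sub, mul_assoc, he2]; exact sub_self _
      have rhs : (x*e - e*x*e) * e = x*e - e*x*e := by
        rw [sub_mul, mul_assoc x e e, hee, mul_assoc (e*x) e e, hee]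
      replace c2 := c2.eq
      rw [lhs, rhs] at c2
      exact eq_of_sub_eq_zero c2
    rw [e1, e2]
  intro x y
  obtain ⟨e, b, he, hb, hx⟩ := hnc x
  have hbc := (Set.mem_center_iff.mp (hcr b hb)).comm y
  have hec := idem_cent e y he
  rw [hx, add_mul, mul_add, hec, ← hbc]
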